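/- (Uniform bound from subproblem optimality.) Let V ∈ S with every column of G(V) nonzero and let V⁺ := Proj_S(G(V)) be the algorithmic update. Then for every W ∈ S, ρ·⟨Γ(V), V⁺ − W⟩ ≤ 4L_f̃ p + 2√p·‖∇f̃(E/√m)‖_F + (5/2)Lp. -/
import Mathlib


open Matrix

noncomputable section

/-- Squared Frobenius norm `‖A‖_F²`. -/
def frobSq {a b : ℕ} (A : Matrix (Fin a) (Fin b) ℝ) : ℝ := ∑ i, ∑ j, A i j ^ 2

/-- Frobenius norm `‖A‖_F`. -/
def frobNorm {a b : ℕ} (A : Matrix (Fin a) (Fin b) ℝ) : ℝ := Real.sqrt (frobSq A)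

/-- Trace (Frobenius) inner product `⟨A,B⟩ = tr(AᵀB)`. -/
def frobInner {a b : ℕ} (A B : Matrix (Fin a) (Fin b) ℝ) : ℝ := ∑ i, ∑ j, A i j * B i j

/-- Squared spectral norm: `sup {‖Vx‖₂² : ‖x‖₂ = 1}`. -/
def specSq {a b : ℕ} (V : Matrix (Fin a) (Fin b) ℝ) : ℝ :=
  sSup {c | ∃ x : Fin b → ℝ, (∑ j, x j ^ 2) = 1 ∧ c = ∑ i, (∑ j, V i j * x j) ^ 2}

/-- Spectral norm (largest singular value). -/
def specNorm {a b : ℕ} (V : Matrix (Fin a) (Fin b) ℝ) : ℝ := Real.sqrt (specSq V)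

/-- Membership in `S`: all columns have unit Euclidean norm. -/
def unitCols {a b : ℕ} (V : Matrix (Fin a) (Fin b) ℝ) : Prop :=
  ∀ j, ∑ i, V i j ^ 2 = 1

/-- Column-wise normalization to unit Euclidean norm (projection onto `S`). -/
def normalizeCols {a b : ℕ} (G : Matrix (Fin a) (Fin b) ℝ) : Matrix (Fin a) (Fin b) ℝ :=
  Matrix.of fun i j => G i j / Real.sqrt (∑ i', G i' j ^ 2)

/-- `u` is a unit eigenvector of `VᵀV` associated with its largest eigenvalue `lam`
(the Rayleigh-quotient bound states that `lam` is the largest eigenvalue). -/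
def isTopEigen {a b : ℕ} (V : Matrix (Fin a) (Fin b) ℝ) (lam : ℝ) (u : Fin b → ℝ) : Prop :=
  (∑ j, u j ^ 2) = 1 ∧ (Vᵀ * V) *ᵥ u = lam • u ∧
    ∀ x : Fin b → ℝ, x ⬝ᵥ ((Vᵀ * V) *ᵥ x) ≤ lam * (x ⬝ᵥ x)

/-- `Γ(V) = −2 V u uᵀ` where `u = u₁(V)`. -/
def GammaOf {a b : ℕ} (V : Matrix (Fin a) (Fin b) ℝ) (u : Fin b → ℝ) :
    Matrix (Fin a) (Fin b) ℝ := (-2 : ℝ) • (V * vecMulVec u u)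

/-- The update direction `G(V) = (2ρ+L)⁻¹ (L V − ∇f̃(V) − ρ Γ(V))`. -/
def Gmap {a b : ℕ} (gradf : Matrix (Fin a) (Fin b) ℝ → Matrix (Fin a) (Fin b) ℝ)
    (ρ L : ℝ) (V : Matrix (Fin a) (Fin b) ℝ) (u : Fin b → ℝ) : Matrix (Fin a) (Fin b) ℝ :=
  (2 * ρ + L)⁻¹ • (L • V - gradf V - ρ • GammaOf V u)

/-- Penalized objective `Φ_ρ(V) = f̃(V) + ρ(‖V‖_F² − ‖V‖²)`. -/
def Phi {a b : ℕ} (f : Matrix (Fin a) (Fin b) ℝ → ℝ) (ρ : ℝ)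
    (V : Matrix (Fin a) (Fin b) ℝ) : ℝ := f V + ρ * (frobSq V - specSq V)

/-- Stationarity residual `𝒢_ρ(V,Γ) = inf_t ‖∇f̃(V) + 2ρV + ρΓ + V·Diag(t)‖_F`. -/
def Gres {a b : ℕ} (gradf : Matrix (Fin a) (Fin b) ℝ → Matrix (Fin a) (Fin b) ℝ) (ρ : ℝ)
    (V Γ : Matrix (Fin a) (Fin b) ℝ) : ℝ :=
  ⨅ t : Fin b → ℝ, frobNorm (gradf V + (2 * ρ) • V + ρ • Γ + V * Matrix.diagonal t)

/-- The all-ones matrix `E` scaled by `1/√m`. -/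
def Escaled (a b : ℕ) : Matrix (Fin a) (Fin b) ℝ :=
  (Real.sqrt a)⁻¹ • Matrix.of fun _ _ => (1 : ℝ)

attribute [local instance] Matrix.frobeniusNormedAddCommGroup Matrix.frobeniusNormedSpace

/-- The continuous linear functional `W ↦ ⟨A, W⟩` (Frobenius pairing); used to state that
`∇f̃` is the gradient of `f̃` with respect to the trace inner product. -/
def frobCLM {a b : ℕ} (A : Matrix (Fin a) (Fin b) ℝ) :
    Matrix (Fin a) (Fin b) ℝ →L[ℝ] ℝ :=
  LinearMap.toContinuousLinearMap
    { toFun := fun W => frobInner A W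
      map_add' := fun W W' => by
        simp [frobInner, Matrix.add_apply, mul_add, Finset.sum_add_distrib]
      map_smul' := fun c W => by
        simp [frobInner, Matrix.smul_apply, smul_eq_mul, Finset.mul_sum, mul_left_comm] }

lemma my_frobSq_nonneg {a b : ℕ} (A : Matrix (Fin a) (Fin b) ℝ) : 0 ≤ frobSq A :=
  Finset.sum_nonneg fun _ _ => Finset.sum_nonneg fun _ _ => sq_nonneg _

lemma my_frobNorm_nonneg {a b : ℕ} (A : Matrix (Fin a) (Fin b) ℝ) : 0 ≤ frobNorm A :=
  Real.sqrt_nonneg _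

lemma my_frobNorm_sq {a b : ℕ} (A : Matrix (Fin a) (Fin b) ℝ) : frobNorm A ^ 2 = frobSq A :=
  Real.sq_sqrt (my_frobSq_nonneg A)

lemma my_frobInner_le_norms {a b : ℕ} (A B : Matrix (Fin a) (Fin b) ℝ) :
    frobInner A B ≤ frobNorm A * frobNorm B := by
  have h1 : frobInner A B = ∑ q : Fin a × Fin b, A q.1 q.2 * B q.1 q.2 := by
    rw [frobInner, Fintype.sum_prod_type]
  have h2 : frobSq A = ∑ q : Fin a × Fin b, A q.1 q.2 ^ 2 := by
    rw [frobSq, Fintype.sum_prod_type]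
  have h3 : frobSq B = ∑ q : Fin a × Fin b, B q.1 q.2 ^ 2 := by
    rw [frobSq, Fintype.sum_prod_type]
  have hcs := Finset.sum_mul_sq_le_sq_mul_sq Finset.univ
    (fun q : Fin a × Fin b => A q.1 q.2) (fun q => B q.1 q.2)
  calc frobInner A B ≤ |frobInner A B| := le_abs_self _
    _ = Real.sqrt ((frobInner A B) ^ 2) := (Real.sqrt_sq_eq_abs _).symm
    _ ≤ Real.sqrt (frobSq A * frobSq B) := Real.sqrt_le_sqrt (by rw [h1, h2, h3]; exact hcs)
    _ = frobNorm A * frobNorm B := by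
        rw [frobNorm, frobNorm, Real.sqrt_mul (my_frobSq_nonneg A)]

lemma my_frobNorm_add_le {a b : ℕ} (A B : Matrix (Fin a) (Fin b) ℝ) :
    frobNorm (A + B) ≤ frobNorm A + frobNorm B := by
  have hexp : frobSq (A + B) = frobSq A + 2 * frobInner A B + frobSq B := by
    simp_rw [frobSq, frobInner, Matrix.add_apply, add_sq, Finset.sum_add_distrib,
      Finset.mul_sum]
    ring_nf
  have hle : frobSq (A + B) ≤ (frobNorm A + frobNorm B) ^ 2 := by
    have h := my_frobInner_le_norms A B
    have hA := my_frobNorm_sq A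
    have hB := my_frobNorm_sq B
    nlinarith
  calc frobNorm (A + B) = Real.sqrt (frobSq (A + B)) := rfl
    _ ≤ Real.sqrt ((frobNorm A + frobNorm B) ^ 2) := Real.sqrt_le_sqrt hle
    _ = frobNorm A + frobNorm B := by
        rw [Real.sqrt_sq (add_nonneg (my_frobNorm_nonneg A) (my_frobNorm_nonneg B))]

lemma my_frobNorm_neg {a b : ℕ} (A : Matrix (Fin a) (Fin b) ℝ) :
    frobNorm (-A) = frobNorm A := by
  unfold frobNorm frobSq
  simp

lemma my_frobNorm_sub_le {a b : ℕ} (A B : Matrix (Fin a) (Fin b) ℝ) :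
    frobNorm (A - B) ≤ frobNorm A + frobNorm B := by
  have := my_frobNorm_add_le A (-B)
  rw [my_frobNorm_neg] at this
  simpa [sub_eq_add_neg] using this

lemma my_frobNorm_smul {a b : ℕ} (c : ℝ) (A : Matrix (Fin a) (Fin b) ℝ) :
    frobNorm (c • A) = |c| * frobNorm A := by
  have h : frobSq (c • A) = c ^ 2 * frobSq A := by
    simp_rw [frobSq, Matrix.smul_apply, smul_eq_mul, mul_pow, Finset.mul_sum]
  rw [frobNorm, h, Real.sqrt_mul (sq_nonneg c), Real.sqrt_sq_eq_abs]
  rfl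

lemma my_frobSq_unitCols {a b : ℕ} (A : Matrix (Fin a) (Fin b) ℝ) (h : unitCols A) :
    frobSq A = b := by
  rw [frobSq, Finset.sum_comm]
  calc ∑ j : Fin b, ∑ i : Fin a, A i j ^ 2 = ∑ _j : Fin b, (1:ℝ) :=
        Finset.sum_congr rfl fun j _ => h j
    _ = b := by simp

lemma my_frobNorm_unitCols {a b : ℕ} (A : Matrix (Fin a) (Fin b) ℝ) (h : unitCols A) :
    frobNorm A = Real.sqrt b := by
  rw [frobNorm, my_frobSq_unitCols A h]

lemma my_unitCols_Escaled (a b : ℕ) (ha : 0 < a) : unitCols (Escaled a b) := by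
  intro j
  have ha' : (0:ℝ) < a := by exact_mod_cast ha
  simp only [Escaled, Matrix.smul_apply, Matrix.of_apply, smul_eq_mul, mul_one]
  rw [Finset.sum_const, Finset.card_univ, Fintype.card_fin, nsmul_eq_mul, inv_pow,
    Real.sq_sqrt ha'.le, mul_inv_cancel₀ ha'.ne']

lemma my_frobInner_sub_right {a b : ℕ} (A B C : Matrix (Fin a) (Fin b) ℝ) :
    frobInner A (B - C) = frobInner A B - frobInner A C := by
  simp [frobInner, Matrix.sub_apply, mul_sub, Finset.sum_sub_distrib]

lemma my_frobInner_sub_left {a b : ℕ} (A B C : Matrix (Fin a) (Fin b) ℝ) :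
    frobInner (A - B) C = frobInner A C - frobInner B C := by
  simp [frobInner, Matrix.sub_apply, sub_mul, Finset.sum_sub_distrib]

lemma my_frobInner_smul_left {a b : ℕ} (c : ℝ) (A B : Matrix (Fin a) (Fin b) ℝ) :
    frobInner (c • A) B = c * frobInner A B := by
  simp [frobInner, Matrix.smul_apply, smul_eq_mul, Finset.mul_sum, mul_assoc]

/-- uniform bound from subproblem optimality. For the algorithmic update
`V⁺ = Proj_S(G(V))` and every `W ∈ S`,
`ρ⟨Γ(V), V⁺ − W⟩ ≤ 4L_f̃ p + 2√p‖∇f̃(E/√m)‖_F + (5/2)Lp`. -/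
theorem dcra_uniform_bound (m p : ℕ) (hm : 0 < m) (hp : 0 < p)
    (ftilde : Matrix (Fin m) (Fin p) ℝ → ℝ)
    (gradf : Matrix (Fin m) (Fin p) ℝ → Matrix (Fin m) (Fin p) ℝ)
    (Lf : ℝ) (hLf : 0 < Lf)
    (hderiv : ∀ W : Matrix (Fin m) (Fin p) ℝ, HasFDerivAt ftilde (frobCLM (gradf W)) W)
    (hlip : ∀ W W' : Matrix (Fin m) (Fin p) ℝ,
      frobNorm (gradf W - gradf W') ≤ Lf * frobNorm (W - W'))
    (ρ L : ℝ) (hρ : 0 < ρ) (hL : 0 < L)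
    (V : Matrix (Fin m) (Fin p) ℝ) (hV : unitCols V)
    (u : Fin p → ℝ) (lam : ℝ) (htop : isTopEigen V lam u)
    (hcol : ∀ j, ∃ i, Gmap gradf ρ L V u i j ≠ 0)
    (Vp : Matrix (Fin m) (Fin p) ℝ) (hVp : Vp = normalizeCols (Gmap gradf ρ L V u)) :
    ∀ W : Matrix (Fin m) (Fin p) ℝ, unitCols W →
      ρ * frobInner (GammaOf V u) (Vp - W) ≤
        4 * Lf * (p : ℝ) + 2 * Real.sqrt p * frobNorm (gradf (Escaled m p))
          + (5 / 2) * L * (p : ℝ) := by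
  intro W hW
  set A := Gmap gradf ρ L V u with hA
  set g := frobNorm (gradf (Escaled m p)) with hg
  have hg0 : 0 ≤ g := my_frobNorm_nonneg _
  have hp' : (0:ℝ) ≤ p := Nat.cast_nonneg p
  have hsp : Real.sqrt p * Real.sqrt p = p := Real.mul_self_sqrt hp'
  have hsp0 : 0 ≤ Real.sqrt p := Real.sqrt_nonneg _
  -- column norms positive
  have hsj : ∀ j, 0 < ∑ i, A i j ^ 2 := by
    intro j
    obtain ⟨i, hi⟩ := hcol j
    exact Finset.sum_pos' (fun _ _ => sq_nonneg _)
      ⟨i, Finset.mem_univ i, by positivity⟩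
  -- Vp has unit columns
  have hVpU : unitCols Vp := by
    intro j
    have hs := hsj j
    rw [hVp]
    simp only [normalizeCols, Matrix.of_apply, div_pow, Real.sq_sqrt hs.le]
    rw [← Finset.sum_div, div_self hs.ne']
  -- Step 1: Vp maximizes ⟨A, ·⟩ over S
  have hstep1 : frobInner A W ≤ frobInner A Vp := by
    have hAW : frobInner A W = ∑ j, ∑ i, A i j * W i j := by
      rw [frobInner]; exact Finset.sum_comm
    have hAV : frobInner A Vp = ∑ j, Real.sqrt (∑ i, A i j ^ 2) := by
      rw [frobInner, Finset.sum_comm]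
      refine Finset.sum_congr rfl fun j _ => ?_
      have hterm : ∀ i, A i j * Vp i j = A i j ^ 2 / Real.sqrt (∑ i', A i' j ^ 2) := by
        intro i
        rw [hVp]
        simp only [normalizeCols, Matrix.of_apply]
        rw [← mul_div_assoc, ← pow_two]
      simp_rw [hterm]
      rw [← Finset.sum_div, Real.div_sqrt]
    rw [hAW, hAV]
    refine Finset.sum_le_sum fun j _ => ?_
    have hcs := Finset.sum_mul_sq_le_sq_mul_sq Finset.univ
      (fun i => A i j) (fun i => W i j)
    calc ∑ i, A i j * W i j ≤ |∑ i, A i j * W i j| := le_abs_self _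
      _ = Real.sqrt ((∑ i, A i j * W i j) ^ 2) := (Real.sqrt_sq_eq_abs _).symm
      _ ≤ Real.sqrt (∑ i, A i j ^ 2) := by
          apply Real.sqrt_le_sqrt
          calc (∑ i, A i j * W i j) ^ 2
              ≤ (∑ i, A i j ^ 2) * (∑ i, W i j ^ 2) := hcs
            _ = ∑ i, A i j ^ 2 := by rw [hW j, mul_one]
  -- Step 2: rearrangement
  have hc : (0:ℝ) < 2 * ρ + L := by linarith
  have hD : L • V - gradf V - ρ • GammaOf V u = (2 * ρ + L) • A := by
    rw [hA, Gmap, smul_smul, mul_inv_cancel₀ hc.ne', one_smul]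
  have h2 : 0 ≤ frobInner (L • V - gradf V - ρ • GammaOf V u) (Vp - W) := by
    rw [hD, my_frobInner_smul_left, my_frobInner_sub_right]
    exact mul_nonneg hc.le (sub_nonneg.2 hstep1)
  have h3 : ρ * frobInner (GammaOf V u) (Vp - W) ≤
      frobInner (L • V - gradf V) (Vp - W) := by
    rw [my_frobInner_sub_left, my_frobInner_smul_left] at h2
    linarith
  -- Step 3: norm bounds
  have hVn : frobNorm V = Real.sqrt p := my_frobNorm_unitCols V hV
  have hWn : frobNorm W = Real.sqrt p := my_frobNorm_unitCols W hW
  have hVpn : frobNorm Vp = Real.sqrt p := my_frobNorm_unitCols Vp hVpU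
  have hEn : frobNorm (Escaled m p) = Real.sqrt p :=
    my_frobNorm_unitCols _ (my_unitCols_Escaled m p hm)
  have hgrad : frobNorm (gradf V) ≤ 2 * Lf * Real.sqrt p + g := by
    have h1 : frobNorm (gradf V) ≤
        frobNorm (gradf V - gradf (Escaled m p)) + frobNorm (gradf (Escaled m p)) := by
      have := my_frobNorm_add_le (gradf V - gradf (Escaled m p)) (gradf (Escaled m p))
      simpa using this
    have h2' := hlip V (Escaled m p)
    have h3' : frobNorm (V - Escaled m p) ≤ 2 * Real.sqrt p := by
      have := my_frobNorm_sub_le V (Escaled m p)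
      rw [hVn, hEn] at this
      linarith
    nlinarith [hLf.le]
  have hDn : frobNorm (L • V - gradf V) ≤ L * Real.sqrt p + (2 * Lf * Real.sqrt p + g) := by
    have := my_frobNorm_sub_le (L • V) (gradf V)
    rw [my_frobNorm_smul, abs_of_pos hL, hVn] at this
    linarith
  have hdiff : frobNorm (Vp - W) ≤ 2 * Real.sqrt p := by
    have := my_frobNorm_sub_le Vp W
    rw [hVpn, hWn] at this
    linarith
  have hfinal : frobInner (L • V - gradf V) (Vp - W) ≤
      (L * Real.sqrt p + (2 * Lf * Real.sqrt p + g)) * (2 * Real.sqrt p) := by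
    refine le_trans (my_frobInner_le_norms _ _) ?_
    have hnn : 0 ≤ L * Real.sqrt p + (2 * Lf * Real.sqrt p + g) :=
      add_nonneg (by positivity) (add_nonneg (by positivity) hg0)
    exact mul_le_mul hDn hdiff (my_frobNorm_nonneg _) hnn
  have harith : (L * Real.sqrt p + (2 * Lf * Real.sqrt p + g)) * (2 * Real.sqrt p) ≤
      4 * Lf * (p : ℝ) + 2 * Real.sqrt p * g + (5 / 2) * L * (p : ℝ) := by
    nlinarith [hsp, hL.le, hp', mul_nonneg hL.le hp']
  linarith

end
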